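/- Let X be a complex Banach space with property (A). Let (U_k)_{k=1}^∞ and (V_k)_{k=1}^∞ be sequences in L(X) with sup_n max_{ε_k=±1} ‖Σ_{k=1}^n ε_k U_k‖ ≤ M and sup_n max_{ε_k=±1} ‖Σ_{k=1}^n ε_k V_k‖ ≤ M, such that every U_j commutes with every V_k. Then there is a constant C, depending only on the property (A) constant of X, such that the family { Σ_{k=1}^n α_k U_k V_k : n ∈ ℕ, |α_k| ≤ 1 } is WR-bounded with constant C·M². -/

import Mathlib

open MeasureTheory Complex Set Filter

noncomputable section

/-- The sign `±1` attached to a Boolean. -/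
def bsign (b : Bool) : ℝ := if b then 1 else -1

section RadDefs

variable {Y : Type*} [NormedAddCommGroup Y] [NormedSpace ℂ Y]

/-- `E ‖∑ εₖ xₖ‖²`, the average over all `2^n` choices of signs. -/
def radAvg {n : ℕ} (x : Fin n → Y) : ℝ :=
  (∑ ε : Fin n → Bool, ‖∑ k, bsign (ε k) • x k‖ ^ 2) / (2 ^ n : ℝ)

/-- `max_{εₖ = ±1} ‖∑ εₖ xₖ‖`. -/
def signSup {n : ℕ} (x : Fin n → Y) : ℝ :=
  ⨆ ε : Fin n → Bool, ‖∑ k, bsign (ε k) • x k‖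

/-- `E ‖∑_{j,k} ε_j η_k x_{jk}‖²`, average over two independent families of signs. -/
def radAvg2 {n : ℕ} (x : Fin n → Fin n → Y) : ℝ :=
  (∑ ε : Fin n → Bool, ∑ η : Fin n → Bool,
    ‖∑ j, ∑ k, (bsign (ε j) * bsign (η k)) • x j k‖ ^ 2) / ((2 ^ n : ℝ) * (2 ^ n : ℝ))

end RadDefs

section Aux

variable {Y : Type*} [NormedAddCommGroup Y] [NormedSpace ℂ Y]

lemma sum_comp_castLE {n : ℕ} : ∀ {m : ℕ} (h : n ≤ m) (g : (Fin n → Bool) → ℝ),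
    ∑ η : Fin m → Bool, g (fun k => η (Fin.castLE h k)) = 2^(m-n) * ∑ δ : Fin n → Bool, g δ := by
  intro m
  induction m with
  | zero => intro h g
            have hn : n = 0 := Nat.le_zero.mp h
            subst hn
            simp
  | succ m ih =>
    intro h g
    rcases Nat.lt_or_ge n (m+1) with h' | h'
    · have hnm : n ≤ m := Nat.lt_succ_iff.mp h'
      have key := Equiv.sum_comp (Fin.snocEquiv (fun _ : Fin (m+1) => Bool))
        (fun η => g (fun k => η (Fin.castLE h k)))
      rw [← key, Fintype.sum_prod_type]
      have hterm : ∀ (b : Bool) (f : Fin m → Bool),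
          g (fun k => (Fin.snocEquiv (fun _ => Bool)) (b, f) (Fin.castLE h k))
          = g (fun k => f (Fin.castLE hnm k)) := by
        intro b f
        congr 1
        funext k
        have hc : Fin.castLE h k = Fin.castSucc (Fin.castLE hnm k) := rfl
        rw [hc]
        simp [Fin.snocEquiv]
        exact Fin.snoc_castSucc (α := fun _ => Bool) (p := f) (x := b) (i := Fin.castLE hnm k)
      simp only [hterm]
      rw [Finset.sum_const, ih hnm g]
      simp only [Finset.card_univ, Fintype.card_bool, smul_eq_mul]
      rw [show m + 1 - n = (m - n) + 1 by omega]
      ring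
    · have hnm : n = m + 1 := le_antisymm h h'
      subst hnm
      simp only [Nat.sub_self, pow_zero, one_mul]
      apply Finset.sum_congr rfl
      intro η _
      congr 1

lemma pad_sum {n m : ℕ} (h : n ≤ m) (x : Fin n → Y) (c : Fin m → ℝ) :
    ∑ k : Fin m, c k • (if h' : (k:ℕ) < n then x ⟨k,h'⟩ else 0)
      = ∑ k : Fin n, c (Fin.castLE h k) • x k := by
  rw [← Finset.sum_subset (Finset.subset_univ (Finset.univ.map (Fin.castLEEmb h)))]
  · rw [Finset.sum_map]
    apply Finset.sum_congr rfl
    intro k _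
    simp only [Fin.castLEEmb_apply]
    rw [dif_pos (show ((Fin.castLE h k : Fin m) : ℕ) < n from k.2)]
    rfl
  · intro k _ hk
    have : ¬ ((k:ℕ) < n) := by
      intro hkn
      exact hk (Finset.mem_map.mpr ⟨⟨(k:ℕ), hkn⟩, Finset.mem_univ _, Fin.ext rfl⟩)
    rw [dif_neg this, smul_zero]

lemma radAvg_pad {n m : ℕ} (h : n ≤ m) (x : Fin n → Y) :
    radAvg (fun k : Fin m => if h' : (k:ℕ) < n then x ⟨k,h'⟩ else 0) = radAvg x := by
  unfold radAvg
  have : ∀ η : Fin m → Bool,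
      ‖∑ k : Fin m, bsign (η k) • (if h' : (k:ℕ) < n then x ⟨k,h'⟩ else 0)‖ ^ 2
      = ‖∑ k : Fin n, bsign (η (Fin.castLE h k)) • x k‖ ^ 2 := by
    intro η; rw [pad_sum h x (fun k => bsign (η k))]
  simp only [this]
  rw [sum_comp_castLE h (fun δ => ‖∑ k : Fin n, bsign (δ k) • x k‖ ^ 2)]
  rw [show m = (m - n) + n by omega, pow_add]
  field_simp
  ring
  rw [Nat.add_sub_cancel]


lemma radAvg2_nonneg {m : ℕ} (x : Fin m → Fin m → Y) : 0 ≤ radAvg2 x := by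
  unfold radAvg2
  apply div_nonneg
  · apply Finset.sum_nonneg; intro ε _; apply Finset.sum_nonneg; intro η _; positivity
  · positivity

lemma radAvg_nonneg {m : ℕ} (x : Fin m → Y) : 0 ≤ radAvg x := by
  unfold radAvg
  apply div_nonneg
  · apply Finset.sum_nonneg; intro ε _; positivity
  · positivity

lemma radAvg2_op_left {m : ℕ} (W : Fin m → Y →L[ℂ] Y) (y : Fin m → Y) (M : ℝ) (hM : 0 ≤ M)
    (hW : ∀ ε : Fin m → Bool, ‖∑ j, bsign (ε j) • W j‖ ≤ M) :
    radAvg2 (fun j k => W j (y k)) ≤ M^2 * radAvg y := by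
  unfold radAvg2 radAvg
  have key : ∀ (ε η : Fin m → Bool),
      ‖∑ j, ∑ k, (bsign (ε j) * bsign (η k)) • W j (y k)‖ ^ 2
        ≤ M^2 * ‖∑ k, bsign (η k) • y k‖ ^ 2 := by
    intro ε η
    have heq : ∑ j, ∑ k, (bsign (ε j) * bsign (η k)) • W j (y k)
        = (∑ j, bsign (ε j) • W j) (∑ k, bsign (η k) • y k) := by
      simp only [ContinuousLinearMap.sum_apply, ContinuousLinearMap.smul_apply, map_sum,
        Finset.smul_sum, mul_smul, ContinuousLinearMap.map_smul_of_tower]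
      rw [Finset.sum_comm]
    rw [heq, ← mul_pow]
    apply pow_le_pow_left₀ (norm_nonneg _)
    calc ‖(∑ j, bsign (ε j) • W j) (∑ k, bsign (η k) • y k)‖
        ≤ ‖∑ j, bsign (ε j) • W j‖ * ‖∑ k, bsign (η k) • y k‖ :=
          ContinuousLinearMap.le_opNorm _ _
      _ ≤ M * ‖∑ k, bsign (η k) • y k‖ :=
          mul_le_mul_of_nonneg_right (hW ε) (norm_nonneg _)
  calc (∑ ε : Fin m → Bool, ∑ η : Fin m → Bool,
          ‖∑ j, ∑ k, (bsign (ε j) * bsign (η k)) • W j (y k)‖ ^ 2) / ((2^m : ℝ) * (2^m : ℝ))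
      ≤ (∑ _ε : Fin m → Bool, ∑ η : Fin m → Bool,
          M^2 * ‖∑ k, bsign (η k) • y k‖ ^ 2) / ((2^m : ℝ) * (2^m : ℝ)) := by
        gcongr with ε _ η _
        exact key ε η
    _ = M^2 * ((∑ η : Fin m → Bool, ‖∑ k, bsign (η k) • y k‖ ^ 2) / (2^m : ℝ)) := by
        rw [Finset.sum_const, ← Finset.mul_sum]
        simp only [Finset.card_univ, Fintype.card_pi, Fintype.card_bool, Finset.prod_const,
          Finset.card_univ, Fintype.card_fin, nsmul_eq_mul]
        push_cast
        field_simp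

lemma radAvg2_op_right {m : ℕ} (W : Fin m → Y →L[ℂ] Y) (g : Fin m → Y →L[ℂ] ℂ) (M : ℝ)
    (hM : 0 ≤ M) (hW : ∀ ε : Fin m → Bool, ‖∑ j, bsign (ε j) • W j‖ ≤ M) :
    radAvg2 (fun j k => (g k).comp (W j)) ≤ M^2 * radAvg g := by
  unfold radAvg2 radAvg
  have key : ∀ (ε η : Fin m → Bool),
      ‖∑ j, ∑ k, (bsign (ε j) * bsign (η k)) • (g k).comp (W j)‖ ^ 2
        ≤ M^2 * ‖∑ k, bsign (η k) • g k‖ ^ 2 := by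
    intro ε η
    have heq : ∑ j, ∑ k, (bsign (ε j) * bsign (η k)) • (g k).comp (W j)
        = (∑ k, bsign (η k) • g k).comp (∑ j, bsign (ε j) • W j) := by
      ext z
      simp only [ContinuousLinearMap.coe_comp', Function.comp_apply,
        ContinuousLinearMap.coe_sum', Finset.sum_apply, ContinuousLinearMap.coe_smul',
        Pi.smul_apply, map_sum, ContinuousLinearMap.map_smul_of_tower, mul_smul]
      simp only [Finset.smul_sum]
      rw [Finset.sum_comm]
      refine Finset.sum_congr rfl fun i _ => Finset.sum_congr rfl fun j _ => ?_
      rw [smul_comm]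
    rw [heq, ← mul_pow]
    apply pow_le_pow_left₀ (norm_nonneg _)
    calc ‖(∑ k, bsign (η k) • g k).comp (∑ j, bsign (ε j) • W j)‖
        ≤ ‖∑ k, bsign (η k) • g k‖ * ‖∑ j, bsign (ε j) • W j‖ :=
          ContinuousLinearMap.opNorm_comp_le _ _
      _ ≤ ‖∑ k, bsign (η k) • g k‖ * M :=
          mul_le_mul_of_nonneg_left (hW ε) (norm_nonneg _)
      _ = M * ‖∑ k, bsign (η k) • g k‖ := mul_comm _ _
  calc (∑ ε : Fin m → Bool, ∑ η : Fin m → Bool,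
          ‖∑ j, ∑ k, (bsign (ε j) * bsign (η k)) • (g k).comp (W j)‖ ^ 2)
            / ((2^m : ℝ) * (2^m : ℝ))
      ≤ (∑ _ε : Fin m → Bool, ∑ η : Fin m → Bool,
          M^2 * ‖∑ k, bsign (η k) • g k‖ ^ 2) / ((2^m : ℝ) * (2^m : ℝ)) := by
        gcongr with ε _ η _
        exact key ε η
    _ = M^2 * ((∑ η : Fin m → Bool, ‖∑ k, bsign (η k) • g k‖ ^ 2) / (2^m : ℝ)) := by
        rw [Finset.sum_const, ← Finset.mul_sum]
        simp only [Finset.card_univ, Fintype.card_pi, Fintype.card_bool, Finset.prod_const,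
          Finset.card_univ, Fintype.card_fin, nsmul_eq_mul]
        push_cast
        field_simp

end Aux


section Bounded

variable {X : Type*} [NormedAddCommGroup X] [NormedSpace ℂ X]

/-- Rademacher boundedness with constant `C`. -/
def RBoundedWith (C : ℝ) (𝒯 : Set (X →L[ℂ] X)) : Prop :=
  ∀ (n : ℕ) (T : Fin n → X →L[ℂ] X), (∀ k, T k ∈ 𝒯) → ∀ x : Fin n → X,
    Real.sqrt (radAvg fun k => T k (x k)) ≤ C * Real.sqrt (radAvg x)

/-- Weak Rademacher boundedness with constant `C`. -/
def WRBoundedWith (C : ℝ) (𝒯 : Set (X →L[ℂ] X)) : Prop :=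
  ∀ (n : ℕ) (T : Fin n → X →L[ℂ] X), (∀ k, T k ∈ 𝒯) →
    ∀ (x : Fin n → X) (xs : Fin n → X →L[ℂ] ℂ),
      ∑ k, ‖xs k (T k (x k))‖ ≤ C * Real.sqrt (radAvg x) * Real.sqrt (radAvg xs)

/-- Unconditional boundedness with constant `C`. -/
def UBoundedWith (C : ℝ) (𝒯 : Set (X →L[ℂ] X)) : Prop :=
  ∀ (n : ℕ) (T : Fin n → X →L[ℂ] X), (∀ k, T k ∈ 𝒯) →
    ∀ (x : Fin n → X) (xs : Fin n → X →L[ℂ] ℂ),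
      ∑ k, ‖xs k (T k (x k))‖ ≤ C * signSup x * signSup xs

end Bounded

/-- Pisier's property (α) with constant `C`. -/
def PropAlphaWith (C : ℝ) (X : Type*) [NormedAddCommGroup X] [NormedSpace ℂ X] : Prop :=
  ∀ (n : ℕ) (x : Fin n → Fin n → X) (α : Fin n → Fin n → ℂ), (∀ j k, ‖α j k‖ ≤ 1) →
    Real.sqrt (radAvg2 fun j k => α j k • x j k) ≤ C * Real.sqrt (radAvg2 x)

/-- Property (A) with constant `C`. -/
def PropAWith (C : ℝ) (X : Type*) [NormedAddCommGroup X] [NormedSpace ℂ X] : Prop :=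
  ∀ (n : ℕ) (x : Fin n → Fin n → X) (xs : Fin n → Fin n → X →L[ℂ] ℂ),
    ∑ j, ∑ k, ‖xs j k (x j k)‖ ≤ C * Real.sqrt (radAvg2 x) * Real.sqrt (radAvg2 xs)

/-- Property (Δ) with constant `C`. -/
def PropDeltaWith (C : ℝ) (X : Type*) [NormedAddCommGroup X] [NormedSpace ℂ X] : Prop :=
  ∀ (n : ℕ) (x : Fin n → Fin n → X),
    Real.sqrt (radAvg2 fun j k => if (k : ℕ) ≤ (j : ℕ) then x j k else 0)
      ≤ C * Real.sqrt (radAvg2 x)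


/-- In a space with property (A) (with constant `CA`), if the sign-sums of
`(U_k)` and `(V_k)` are uniformly bounded by `M` and every `U_j` commutes with every `V_k`,
then `{∑_k α_k U_k V_k : |α_k| ≤ 1}` is WR-bounded with constant `C·M²`, where `C` depends
only on the property (A) constant. -/
theorem stmt_5 : ∀ CA : ℝ, ∃ C : ℝ,
    ∀ (X : Type) [NormedAddCommGroup X] [NormedSpace ℂ X] [CompleteSpace X],
    PropAWith CA X →
    ∀ (U V : ℕ → X →L[ℂ] X) (M : ℝ),
      (∀ (n : ℕ) (ε : ℕ → Bool), ‖∑ k ∈ Finset.range n, bsign (ε k) • U k‖ ≤ M) →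
      (∀ (n : ℕ) (ε : ℕ → Bool), ‖∑ k ∈ Finset.range n, bsign (ε k) • V k‖ ≤ M) →
      (∀ j k : ℕ, U j ∘L V k = V k ∘L U j) →
      WRBoundedWith (C * M ^ 2)
        {W | ∃ (n : ℕ) (α : ℕ → ℂ),
          (∀ k, ‖α k‖ ≤ 1) ∧ W = ∑ k ∈ Finset.range n, α k • (U k ∘L V k)} := by
  intro CA
  refine ⟨|CA|, ?_⟩
  intro X _ _ _ hA U V M hU hV _hcomm
  intro n T hT x xs
  have hM : 0 ≤ M := by simpa using hU 0 (fun _ => true)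
  choose nk αf hα hTk using hT
  set m := max n (Finset.univ.sup nk) with hm
  have hnm : n ≤ m := le_max_left _ _
  have hnkm : ∀ k, nk k ≤ m := fun k =>
    le_trans (Finset.le_sup (Finset.mem_univ k)) (le_max_right _ _)
  set padx : Fin m → X := fun k => if h' : (k:ℕ) < n then x ⟨k,h'⟩ else 0 with hpadx
  set padxs : Fin m → (X →L[ℂ] ℂ) := fun k => if h' : (k:ℕ) < n then xs ⟨k,h'⟩ else 0 with hpadxs
  set XX : Fin m → Fin m → X := fun j k => V (j:ℕ) (padx k) with hXXdef
  set XS : Fin m → Fin m → (X →L[ℂ] ℂ) := fun j k => (padxs k).comp (U (j:ℕ)) with hXSdef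
  have hUm : ∀ ε : Fin m → Bool, ‖∑ j : Fin m, bsign (ε j) • U (j:ℕ)‖ ≤ M := by
    intro ε
    have h2 := hU m (fun i => if h : i < m then ε ⟨i,h⟩ else true)
    rw [← Fin.sum_univ_eq_sum_range
      (fun i => bsign (if h : i < m then ε ⟨i,h⟩ else true) • U i) m] at h2
    calc ‖∑ j : Fin m, bsign (ε j) • U (j:ℕ)‖
        = ‖∑ j : Fin m, bsign (if h : (j:ℕ) < m then ε ⟨(j:ℕ),h⟩ else true) • U (j:ℕ)‖ := by
          congr 1
          apply Finset.sum_congr rfl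
          intro j _
          rw [dif_pos j.2]
      _ ≤ M := h2
  have hVm : ∀ ε : Fin m → Bool, ‖∑ j : Fin m, bsign (ε j) • V (j:ℕ)‖ ≤ M := by
    intro ε
    have h2 := hV m (fun i => if h : i < m then ε ⟨i,h⟩ else true)
    rw [← Fin.sum_univ_eq_sum_range
      (fun i => bsign (if h : i < m then ε ⟨i,h⟩ else true) • V i) m] at h2
    calc ‖∑ j : Fin m, bsign (ε j) • V (j:ℕ)‖
        = ‖∑ j : Fin m, bsign (if h : (j:ℕ) < m then ε ⟨(j:ℕ),h⟩ else true) • V (j:ℕ)‖ := by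
          congr 1
          apply Finset.sum_congr rfl
          intro j _
          rw [dif_pos j.2]
      _ ≤ M := h2
  have step1 : ∑ k : Fin n, ‖xs k (T k (x k))‖ ≤ ∑ j : Fin m, ∑ k : Fin m, ‖XS j k (XX j k)‖ := by
    rw [Finset.sum_comm]
    have hterm : ∀ k : Fin n,
        ‖xs k (T k (x k))‖ ≤ ∑ j : Fin m, ‖XS j (Fin.castLE hnm k) (XX j (Fin.castLE hnm k))‖ := by
      intro k
      have hpx : padx (Fin.castLE hnm k) = x k := by
        simp only [hpadx]
        rw [dif_pos (show ((Fin.castLE hnm k : Fin m) : ℕ) < n from k.2)]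
        rfl
      have hpxs : padxs (Fin.castLE hnm k) = xs k := by
        simp only [hpadxs]
        rw [dif_pos (show ((Fin.castLE hnm k : Fin m) : ℕ) < n from k.2)]
        rfl
      have happ : ∀ j : Fin m,
          XS j (Fin.castLE hnm k) (XX j (Fin.castLE hnm k)) = xs k (U (j:ℕ) (V (j:ℕ) (x k))) := by
        intro j
        simp only [hXXdef, hXSdef, hpx, hpxs, ContinuousLinearMap.comp_apply]
      simp only [happ]
      rw [hTk k]
      have hexp : xs k ((∑ i ∈ Finset.range (nk k), αf k i • (U i ∘L V i)) (x k))
          = ∑ i ∈ Finset.range (nk k), αf k i • xs k (U i (V i (x k))) := by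
        simp [ContinuousLinearMap.sum_apply, ContinuousLinearMap.smul_apply,
          ContinuousLinearMap.comp_apply]
      rw [hexp]
      calc ‖∑ i ∈ Finset.range (nk k), αf k i • xs k (U i (V i (x k)))‖
          ≤ ∑ i ∈ Finset.range (nk k), ‖αf k i • xs k (U i (V i (x k)))‖ :=
            norm_sum_le _ _
        _ ≤ ∑ i ∈ Finset.range (nk k), ‖xs k (U i (V i (x k)))‖ := by
            apply Finset.sum_le_sum
            intro i _
            rw [norm_smul]
            calc ‖αf k i‖ * ‖xs k (U i (V i (x k)))‖
                ≤ 1 * ‖xs k (U i (V i (x k)))‖ :=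
                  mul_le_mul_of_nonneg_right (hα k i) (norm_nonneg _)
              _ = ‖xs k (U i (V i (x k)))‖ := one_mul _
        _ ≤ ∑ i ∈ Finset.range m, ‖xs k (U i (V i (x k)))‖ := by
            apply Finset.sum_le_sum_of_subset_of_nonneg
              (Finset.range_subset_range.mpr (hnkm k))
            intro i _ _
            exact norm_nonneg _
        _ = ∑ j : Fin m, ‖xs k (U (j:ℕ) (V (j:ℕ) (x k)))‖ :=
            (Fin.sum_univ_eq_sum_range (fun i => ‖xs k (U i (V i (x k)))‖) m).symm
    calc ∑ k : Fin n, ‖xs k (T k (x k))‖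
        ≤ ∑ k : Fin n, ∑ j : Fin m, ‖XS j (Fin.castLE hnm k) (XX j (Fin.castLE hnm k))‖ :=
          Finset.sum_le_sum fun k _ => hterm k
      _ = ∑ k ∈ Finset.univ.map (Fin.castLEEmb hnm), ∑ j : Fin m, ‖XS j k (XX j k)‖ := by
          rw [Finset.sum_map]
          rfl
      _ ≤ ∑ k : Fin m, ∑ j : Fin m, ‖XS j k (XX j k)‖ := by
          apply Finset.sum_le_sum_of_subset_of_nonneg (Finset.subset_univ _)
          intro k _ _
          exact Finset.sum_nonneg fun j _ => norm_nonneg _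
  have h1 : Real.sqrt (radAvg2 XX) ≤ M * Real.sqrt (radAvg x) := by
    have hb : radAvg2 XX ≤ M^2 * radAvg padx :=
      radAvg2_op_left (fun j => V (j:ℕ)) padx M hM hVm
    have hpad : radAvg padx = radAvg x := radAvg_pad hnm x
    calc Real.sqrt (radAvg2 XX) ≤ Real.sqrt (M^2 * radAvg padx) := Real.sqrt_le_sqrt hb
      _ = M * Real.sqrt (radAvg x) := by
          rw [hpad, Real.sqrt_mul (sq_nonneg M), Real.sqrt_sq hM]
  have h2 : Real.sqrt (radAvg2 XS) ≤ M * Real.sqrt (radAvg xs) := by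
    have hb : radAvg2 XS ≤ M^2 * radAvg padxs :=
      radAvg2_op_right (fun j => U (j:ℕ)) padxs M hM hUm
    have hpad : radAvg padxs = radAvg xs := radAvg_pad hnm xs
    calc Real.sqrt (radAvg2 XS) ≤ Real.sqrt (M^2 * radAvg padxs) := Real.sqrt_le_sqrt hb
      _ = M * Real.sqrt (radAvg xs) := by
          rw [hpad, Real.sqrt_mul (sq_nonneg M), Real.sqrt_sq hM]
  calc ∑ k : Fin n, ‖xs k (T k (x k))‖
      ≤ ∑ j : Fin m, ∑ k : Fin m, ‖XS j k (XX j k)‖ := step1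
    _ ≤ CA * Real.sqrt (radAvg2 XX) * Real.sqrt (radAvg2 XS) := hA m XX XS
    _ ≤ |CA| * Real.sqrt (radAvg2 XX) * Real.sqrt (radAvg2 XS) := by
        apply mul_le_mul_of_nonneg_right _ (Real.sqrt_nonneg _)
        exact mul_le_mul_of_nonneg_right (le_abs_self CA) (Real.sqrt_nonneg _)
    _ ≤ |CA| * (M * Real.sqrt (radAvg x)) * (M * Real.sqrt (radAvg xs)) := by
        have hca : (0:ℝ) ≤ |CA| := abs_nonneg CA
        have := mul_le_mul h1 h2 (Real.sqrt_nonneg _)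
          (mul_nonneg hM (Real.sqrt_nonneg _))
        calc |CA| * Real.sqrt (radAvg2 XX) * Real.sqrt (radAvg2 XS)
            = |CA| * (Real.sqrt (radAvg2 XX) * Real.sqrt (radAvg2 XS)) := by ring
          _ ≤ |CA| * ((M * Real.sqrt (radAvg x)) * (M * Real.sqrt (radAvg xs))) :=
              mul_le_mul_of_nonneg_left this hca
          _ = |CA| * (M * Real.sqrt (radAvg x)) * (M * Real.sqrt (radAvg xs)) := by ring
    _ = |CA| * M ^ 2 * Real.sqrt (radAvg x) * Real.sqrt (radAvg xs) := by ring


end
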